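/- For every integer k ≥ 3, the polynomial X^(2^k) − 1 over F_3 factors into irreducibles as (X − 1)(X + 1)(X² + 1) · ∏_{i=3}^{k} ∏_{u ∈ {1,2}} (X^(2^(i-2)) + u·X^(2^(i-3)) + 2). -/

import Mathlib

open Polynomial

private lemma three_eq_zero : (3 : (ZMod 3)[X]) = 0 := by
  exact_mod_cast CharP.cast_eq_zero ((ZMod 3)[X]) 3

private lemma pair_prod (t : ℕ) :
    ∏ u ∈ ({1, 2} : Finset (ZMod 3)),
      ((X : (ZMod 3)[X]) ^ (2 ^ (t + 1)) + C u * X ^ (2 ^ t) + 2) =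
      X ^ (2 ^ (t + 2)) + 1 := by
  rw [Finset.prod_pair (by decide)]
  have h2 : ((X : (ZMod 3)[X]) ^ (2 ^ t)) ^ 2 = X ^ (2 ^ (t + 1)) := by
    rw [← pow_mul, ← pow_succ]
  have h4 : ((X : (ZMod 3)[X]) ^ (2 ^ t)) ^ 4 = X ^ (2 ^ (t + 2)) := by
    rw [← pow_mul]
    congr 1
    rw [pow_add]
    norm_num
  rw [← h2, ← h4]
  have hC1 : (C (1 : ZMod 3)) = 1 := map_one C
  have hC2 : (C (2 : ZMod 3)) = 2 := map_ofNat C 2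
  rw [hC1, hC2]
  set Y := (X : (ZMod 3)[X]) ^ (2 ^ t)
  linear_combination (Y ^ 3 + 2 * Y ^ 2 + 2 * Y + 1) * three_eq_zero

private lemma three_pow_aux (j : ℕ) : ∃ c, Odd c ∧ 3 ^ 2 ^ (j + 1) = 1 + 2 ^ (j + 3) * c := by
  induction j with
  | zero => exact ⟨1, odd_one, by norm_num⟩
  | succ s ih =>
    obtain ⟨c, hc, he⟩ := ih
    refine ⟨c + 2 ^ (s + 2) * c ^ 2, hc.add_even ⟨2 ^ (s + 1) * c ^ 2, by ring⟩, ?_⟩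
    have : (3 : ℕ) ^ 2 ^ (s + 2) = (3 ^ 2 ^ (s + 1)) ^ 2 := by
      rw [← pow_mul, ← pow_succ]
    rw [this, he]
    ring

private lemma ord_lower (t d : ℕ) (hd : 2 ^ (t + 3) ∣ 3 ^ d - 1) : 2 ^ (t + 1) ∣ d := by
  have hcast : ∀ e : ℕ, ((3 : ZMod (2 ^ (t + 3))) ^ e = 1 ↔ 2 ^ (t + 3) ∣ 3 ^ e - 1) := by
    intro e
    have h1 : (3 : ZMod (2 ^ (t + 3))) ^ e = ((3 ^ e : ℕ) : ZMod (2 ^ (t + 3))) := by push_cast; ring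
    have h2 : (1 : ZMod (2 ^ (t + 3))) = ((1 : ℕ) : ZMod (2 ^ (t + 3))) := by norm_num
    rw [h1, h2, ZMod.natCast_eq_natCast_iff]
    rw [Nat.ModEq.comm, Nat.modEq_iff_dvd' (Nat.one_le_pow _ _ (by norm_num))]
  obtain ⟨c, hc, he⟩ := three_pow_aux t
  have h1 : (3 : ZMod (2 ^ (t + 3))) ^ 2 ^ (t + 1) = 1 :=
    (hcast _).mpr ⟨c, by omega⟩
  have h2 : (3 : ZMod (2 ^ (t + 3))) ^ 2 ^ t ≠ 1 := by
    intro h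
    have hdvd := (hcast _).mp h
    match t, hdvd with
    | 0, hdvd => norm_num at hdvd
    | (s + 1), hdvd =>
      obtain ⟨c', hc', he'⟩ := three_pow_aux s
      have heq : (3 : ℕ) ^ 2 ^ (s + 1) - 1 = 2 ^ (s + 3) * c' := by omega
      rw [heq] at hdvd
      have h2c : 2 ^ (s + 3) * 2 ∣ 2 ^ (s + 3) * c' := by
        rw [← pow_succ, show s + 3 + 1 = s + 1 + 3 by omega]
        exact hdvd
      have : (2 : ℕ) ∣ c' := (mul_dvd_mul_iff_left (a := (2:ℕ) ^ (s + 3))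
        (pow_ne_zero _ two_ne_zero)).mp h2c
      rw [Nat.odd_iff] at hc'
      omega
  have hord : orderOf (3 : ZMod (2 ^ (t + 3))) ∣ 2 ^ (t + 1) := orderOf_dvd_of_pow_eq_one h1
  obtain ⟨s, hs, hseq⟩ := (Nat.dvd_prime_pow Nat.prime_two).mp hord
  have hst : s = t + 1 := by
    by_contra hne
    have hs' : s ≤ t := by omega
    exact h2 (orderOf_dvd_iff_pow_eq_one.mp (hseq ▸ pow_dvd_pow 2 hs'))
  have hfin : orderOf (3 : ZMod (2 ^ (t + 3))) ∣ d :=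
    orderOf_dvd_of_pow_eq_one ((hcast d).mpr hd)
  rwa [hseq, hst] at hfin

private lemma irr_aux (t : ℕ) (u : ZMod 3) (hu : u = 1 ∨ u = 2) :
    Irreducible ((X : (ZMod 3)[X]) ^ (2 ^ (t + 1)) + C u * X ^ (2 ^ t) + 2) := by
  set f : (ZMod 3)[X] := X ^ (2 ^ (t + 1)) + C u * X ^ (2 ^ t) + 2 with hf_def
  have hfdvd : f ∣ X ^ (2 ^ (t + 2)) + 1 := by
    rw [← pair_prod t]
    apply Finset.dvd_prod_of_mem
    rcases hu with h | h <;> simp [h]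
  have hdeglt : ((C u * X ^ (2 ^ t) + 2 : (ZMod 3)[X])).degree <
      ((X : (ZMod 3)[X]) ^ (2 ^ (t + 1))).degree := by
    rw [degree_X_pow]
    refine lt_of_le_of_lt (degree_add_le _ _) ?_
    rw [max_lt_iff]
    constructor
    · refine lt_of_le_of_lt (degree_C_mul_X_pow_le _ _) ?_
      exact_mod_cast Nat.pow_lt_pow_right (by norm_num) (lt_add_one t)
    · rw [← map_ofNat (C : ZMod 3 →+* (ZMod 3)[X]) 2]
      refine lt_of_le_of_lt degree_C_le ?_
      exact_mod_cast (Nat.pow_pos (by norm_num) : 0 < 2 ^ (t+1))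
  have hfeq : f = X ^ (2 ^ (t + 1)) + (C u * X ^ (2 ^ t) + 2) := by rw [hf_def]; ring
  have hm : f.Monic := by
    rw [hfeq]; exact (monic_X_pow _).add_of_left hdeglt
  have hdf : f.natDegree = 2 ^ (t + 1) := by
    rw [hfeq]
    have := degree_add_eq_left_of_degree_lt hdeglt
    rw [natDegree, this, degree_X_pow]
    rfl
  have hf0 : f ≠ 0 := hm.ne_zero
  have hfnu : ¬ IsUnit f := not_isUnit_of_natDegree_pos f (by
    rw [hdf]; exact Nat.pow_pos (by norm_num))
  obtain ⟨g, hgirr, hgdvd⟩ := WfDvdMonoid.exists_irreducible_factor hfnu hf0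
  haveI := Fact.mk hgirr
  have hg0 : g ≠ 0 := hgirr.ne_zero
  let pb := AdjoinRoot.powerBasis hg0
  haveI : Fintype (AdjoinRoot g) := Module.fintypeOfFintype pb.basis
  have hcard : Fintype.card (AdjoinRoot g) = 3 ^ g.natDegree := by
    rw [Module.card_fintype pb.basis, ZMod.card, Fintype.card_fin,
      show pb.dim = g.natDegree from AdjoinRoot.powerBasis_dim hg0]
  set ζ : AdjoinRoot g := AdjoinRoot.root g with hζ
  have hζg : (Polynomial.aeval ζ) g = 0 := by
    rw [aeval_def, AdjoinRoot.algebraMap_eq]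
    exact AdjoinRoot.eval₂_root g
  have hζpow : ζ ^ (2 ^ (t + 2)) = -1 := by
    obtain ⟨w, hw⟩ := dvd_trans hgdvd hfdvd
    have h0 := congrArg (Polynomial.aeval ζ) hw
    simp only [map_add, map_pow, aeval_X, map_one, map_mul, hζg, zero_mul] at h0
    linear_combination h0
  haveI : CharP (AdjoinRoot g) 3 :=
    charP_of_injective_algebraMap (algebraMap (ZMod 3) (AdjoinRoot g)).injective 3
  haveI : Fact (2 < 3) := Fact.mk (by norm_num)
  have hne : (-1 : AdjoinRoot g) ≠ 1 := CharP.neg_one_ne_one (AdjoinRoot g) 3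
  have hζ1 : ζ ^ (2 ^ (t + 3)) = 1 := by
    have : (2 : ℕ) ^ (t + 3) = 2 ^ (t + 2) * 2 := by rw [pow_succ]
    rw [this, pow_mul, hζpow]
    ring
  have hζ0 : ζ ≠ 0 := by
    intro h
    rw [h, zero_pow (pow_ne_zero _ two_ne_zero)] at hζpow
    exact one_ne_zero (α := AdjoinRoot g) (by linear_combination hζpow)
  have hordeq : orderOf ζ = 2 ^ (t + 3) := by
    obtain ⟨s, hs, hseq⟩ := (Nat.dvd_prime_pow Nat.prime_two).mp
      (orderOf_dvd_of_pow_eq_one hζ1)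
    have hst : s = t + 3 := by
      by_contra hne'
      have hs' : s ≤ t + 2 := by omega
      have : ζ ^ (2 ^ (t + 2)) = 1 :=
        orderOf_dvd_iff_pow_eq_one.mp (hseq ▸ pow_dvd_pow 2 hs')
      rw [hζpow] at this
      exact hne this
    rw [hseq, hst]
  have hdvd2 : 2 ^ (t + 3) ∣ 3 ^ g.natDegree - 1 := by
    have h := FiniteField.pow_card_sub_one_eq_one ζ hζ0
    have h2 := orderOf_dvd_of_pow_eq_one h
    rwa [hordeq, hcard] at h2
  have hdd : 2 ^ (t + 1) ∣ g.natDegree := ord_lower t _ hdvd2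
  have hdle : g.natDegree ≤ 2 ^ (t + 1) := hdf ▸ natDegree_le_of_dvd hgdvd hf0
  have hdpos : 0 < g.natDegree := hgirr.natDegree_pos
  have hdeq : g.natDegree = 2 ^ (t + 1) := le_antisymm hdle (Nat.le_of_dvd hdpos hdd)
  obtain ⟨h, hfh⟩ := hgdvd
  have hh0 : h ≠ 0 := by rintro rfl; rw [mul_zero] at hfh; exact hf0 hfh
  have hhdeg : h.natDegree = 0 := by
    have := natDegree_mul hg0 hh0
    rw [← hfh, hdf, hdeq] at this
    omega
  have hhunit : IsUnit h := by
    rw [Polynomial.eq_C_of_natDegree_eq_zero hhdeg]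
    refine Polynomial.isUnit_C.mpr (isUnit_iff_ne_zero.mpr ?_)
    intro hc
    apply hh0
    rw [Polynomial.eq_C_of_natDegree_eq_zero hhdeg, hc, map_zero]
  have hassoc : Associated g f := ⟨hhunit.unit, by rw [IsUnit.unit_spec, ← hfh]⟩
  exact hassoc.irreducible hgirr

private lemma step_ring (n : ℕ) :
    ((X : (ZMod 3)[X]) ^ (2 ^ n) - 1) * (X ^ (2 ^ n) + 1) = X ^ (2 ^ (n + 1)) - 1 := by
  have : (X : (ZMod 3)[X]) ^ (2 ^ (n + 1)) = (X ^ (2 ^ n)) ^ 2 := by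
    rw [← pow_mul, ← pow_succ]
  rw [this]
  ring

theorem X_pow_two_pow_sub_one_factorization_F3 (k : ℕ) (hk : 3 ≤ k) :
    (X ^ (2 ^ k) - 1 : (ZMod 3)[X]) =
      (X - 1) * (X + 1) * (X ^ 2 + 1) *
        ∏ i ∈ Finset.Icc 3 k, ∏ u ∈ ({1, 2} : Finset (ZMod 3)),
          (X ^ (2 ^ (i - 2)) + C u * X ^ (2 ^ (i - 3)) + 2) ∧
    ∀ i ∈ Finset.Icc 3 k, ∀ u ∈ ({1, 2} : Finset (ZMod 3)),
      Irreducible (X ^ (2 ^ (i - 2)) + C u * X ^ (2 ^ (i - 3)) + 2 : (ZMod 3)[X]) := by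
  constructor
  · induction k, hk using Nat.le_induction with
    | base =>
      rw [Finset.Icc_self, Finset.prod_singleton]
      norm_num
      have := pair_prod 0
      norm_num at this
      rw [this]
      ring
    | succ k hk ih =>
      rw [Finset.prod_Icc_succ_top (by omega : 3 ≤ k + 1)]
      have e1 : k + 1 - 2 = (k - 2) + 1 := by omega
      have e2 : k + 1 - 3 = k - 2 := by omega
      have e3 : (k - 2) + 2 = k := by omega
      rw [e1, e2]
      have hp := pair_prod (k - 2)
      rw [e3] at hp
      rw [hp, ← mul_assoc, ← ih, step_ring]
  · intro i hi u hu
    have hi3 : 3 ≤ i := (Finset.mem_Icc.mp hi).1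
    have e1 : i - 2 = (i - 3) + 1 := by omega
    rw [e1]
    apply irr_aux
    simpa using hu
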